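/- Let a ∈ L¹(ℝ^n_+, x₁^{α(c₁−1)}⋯x_n^{α(c_n−1)} dx) for some reals c₁,…,c_n < 1 and 0 < α ≤ 1. Then for p₀ > 0 and p in the interior of ℝ^n_+, |Π_α[a](p, p₀)| ≤ C p₀ · ‖a‖_{L¹(ℝ^n_+, x₁^{α(c₁−1)}⋯x_n^{α(c_n−1)})} for some constant C depending on p, and hence Π_α[a](p, p₀) → 0 as p₀ → 0+. -/

import Mathlib

open Real MeasureTheory Filter

/-- The CES product `p ⊙_α x = (∑ (p_k x_k)^α)^(1/α)`. -/
noncomputable def cesProd (n : ℕ) (α : ℝ) (p x : Fin n → ℝ) : ℝ :=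
  (∑ i, (p i * x i) ^ α) ^ (1/α)

/-- `Π_α[a](p,p₀)` for an absolutely continuous measure with density `a`. -/
noncomputable def profitD (n : ℕ) (α : ℝ) (a : (Fin n → ℝ) → ℝ)
    (p : Fin n → ℝ) (p₀ : ℝ) : ℝ :=
  ∫ x in {x : Fin n → ℝ | ∀ i, 0 < x i}, max 0 (p₀ - cesProd n α p x) * a x

theorem stmt15 (n : ℕ) (α : ℝ) (hα0 : 0 < α) (hα1 : α ≤ 1)
    (c : Fin n → ℝ) (hc : ∀ i, c i < 1)
    (a : (Fin n → ℝ) → ℝ)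
    (ha : IntegrableOn (fun x => a x * ∏ i, x i ^ (α * (c i - 1)))
      {x : Fin n → ℝ | ∀ i, 0 < x i})
    (p : Fin n → ℝ) (hp : ∀ i, 0 < p i) :
    (∃ C > (0:ℝ), ∃ δ > (0:ℝ), ∀ p₀ : ℝ, 0 < p₀ → p₀ < δ →
      |profitD n α a p p₀| ≤
        C * p₀ * ∫ x in {x : Fin n → ℝ | ∀ i, 0 < x i},
          |a x| * ∏ i, x i ^ (α * (c i - 1))) ∧
    Tendsto (fun p₀ => profitD n α a p p₀) (nhdsWithin 0 (Set.Ioi 0)) (nhds 0) := by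
  set S : Set (Fin n → ℝ) := {x : Fin n → ℝ | ∀ i, 0 < x i} with hS
  have hSmeas : MeasurableSet S := by
    have : S = Set.pi Set.univ (fun i => Set.Ioi (0:ℝ)) := by
      ext x; simp [hS, Set.mem_pi]
    rw [this]; exact MeasurableSet.univ_pi (fun i => measurableSet_Ioi)
  set w : (Fin n → ℝ) → ℝ := fun x => ∏ i, x i ^ (α * (c i - 1)) with hw
  set C : ℝ := ∏ i, p i ^ (α * (c i - 1)) with hC
  have hCpos : 0 < C := Finset.prod_pos (fun i _ => Real.rpow_pos_of_pos (hp i) _)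
  have hwpos : ∀ x ∈ S, 0 < w x := fun x hx =>
    Finset.prod_pos (fun i _ => Real.rpow_pos_of_pos (hx i) _)
  -- the key pointwise estimate
  have key : ∀ p₀ : ℝ, 0 < p₀ → p₀ < 1 → ∀ x ∈ S,
      |max 0 (p₀ - cesProd n α p x) * a x| ≤ C * p₀ * (|a x| * w x) := by
    intro p₀ hp₀ hp₀1 x hx
    have hwx := hwpos x hx
    have hsum_nonneg : (0:ℝ) ≤ ∑ j, (p j * x j) ^ α :=
      Finset.sum_nonneg fun j _ => Real.rpow_nonneg (mul_nonneg (hp j).le (hx j).le) _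
    by_cases h : cesProd n α p x < p₀
    · have hces0 : 0 ≤ cesProd n α p x := Real.rpow_nonneg hsum_nonneg _
      have hxi : ∀ i, p i * x i ≤ p₀ := by
        intro i
        by_contra hcon
        push_neg at hcon
        have h1 : p₀ ^ α ≤ (p i * x i) ^ α := Real.rpow_le_rpow hp₀.le hcon.le hα0.le
        have h2 : (p i * x i) ^ α ≤ ∑ j, (p j * x j) ^ α :=
          Finset.single_le_sum
            (fun j _ => Real.rpow_nonneg (mul_nonneg (hp j).le (hx j).le) _)
            (Finset.mem_univ i)
        have h3 : cesProd n α p x ^ α = ∑ j, (p j * x j) ^ α := by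
          rw [cesProd, ← Real.rpow_mul hsum_nonneg, one_div,
            inv_mul_cancel₀ hα0.ne', Real.rpow_one]
        have h4 : cesProd n α p x ^ α < p₀ ^ α :=
          Real.rpow_lt_rpow hces0 h hα0
        rw [h3] at h4
        exact absurd (h1.trans h2) (not_le.mpr h4)
      have hone : (1:ℝ) ≤ C * w x := by
        have : C * w x = ∏ i, (p i * x i) ^ (α * (c i - 1)) := by
          rw [hC, hw, ← Finset.prod_mul_distrib]
          exact Finset.prod_congr rfl fun i _ =>
            (Real.mul_rpow (hp i).le (hx i).le).symm
        rw [this]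
        calc (1:ℝ) = ∏ _i : Fin n, (1:ℝ) := by simp
          _ ≤ ∏ i, (p i * x i) ^ (α * (c i - 1)) := by
              refine Finset.prod_le_prod (fun i _ => zero_le_one) fun i _ => ?_
              exact Real.one_le_rpow_of_pos_of_le_one_of_nonpos
                (mul_pos (hp i) (hx i)) ((hxi i).trans hp₀1.le)
                (mul_nonpos_of_nonneg_of_nonpos hα0.le (by linarith [hc i]))
      have hmaxle : max 0 (p₀ - cesProd n α p x) ≤ p₀ :=
        max_le hp₀.le (by linarith)
      calc |max 0 (p₀ - cesProd n α p x) * a x|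
          = max 0 (p₀ - cesProd n α p x) * |a x| := by
            rw [abs_mul, abs_of_nonneg (le_max_left _ _)]
        _ ≤ p₀ * |a x| := by
            exact mul_le_mul_of_nonneg_right hmaxle (abs_nonneg _)
        _ ≤ (C * w x) * (p₀ * |a x|) :=
            le_mul_of_one_le_left (mul_nonneg hp₀.le (abs_nonneg _)) hone
        _ = C * p₀ * (|a x| * w x) := by ring
    · push_neg at h
      have : max 0 (p₀ - cesProd n α p x) = 0 := max_eq_left (by linarith)
      rw [this, zero_mul, abs_zero]
      positivity
  -- integrability of the dominating function
  have hg : IntegrableOn (fun x => |a x| * w x) S := by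
    refine IntegrableOn.congr_fun ha.abs ?_ hSmeas
    intro x hx
    show |a x * w x| = |a x| * w x
    rw [abs_mul]; exact congrArg (|a x| * ·) (abs_of_nonneg (hwpos x hx).le)
  have hmw : Measurable w := by
    rw [hw]; fun_prop
  have hmces : Measurable (fun x : Fin n → ℝ => cesProd n α p x) := by
    unfold cesProd; fun_prop
  have haesm : AEStronglyMeasurable a (volume.restrict S) := by
    have h1 := ha.aestronglyMeasurable
    have h2 : AEStronglyMeasurable (fun x => (a x * w x) * (w x)⁻¹)
        (volume.restrict S) := h1.mul hmw.inv.aestronglyMeasurable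
    refine h2.congr ?_
    filter_upwards [ae_restrict_mem hSmeas] with x hx
    rw [mul_assoc, mul_inv_cancel₀ (hwpos x hx).ne', mul_one]
  have hf : ∀ p₀ : ℝ, 0 < p₀ → p₀ < 1 →
      IntegrableOn (fun x => max 0 (p₀ - cesProd n α p x) * a x) S := by
    intro p₀ h0 h1
    refine Integrable.mono' (hg.const_mul (C * p₀)) ?_ ?_
    · exact ((measurable_const.max (measurable_const.sub hmces)).aestronglyMeasurable).mul haesm
    · filter_upwards [ae_restrict_mem hSmeas] with x hx
      rw [Real.norm_eq_abs]
      exact key p₀ h0 h1 x hx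
  -- the main bound
  have hbound : ∀ p₀ : ℝ, 0 < p₀ → p₀ < 1 →
      |profitD n α a p p₀| ≤ C * p₀ * ∫ x in S, |a x| * w x := by
    intro p₀ h0 h1
    have h5 : ∀ᵐ x ∂(volume.restrict S),
        ‖max 0 (p₀ - cesProd n α p x) * a x‖ ≤ C * p₀ * (|a x| * w x) := by
      filter_upwards [ae_restrict_mem hSmeas] with x hx
      rw [Real.norm_eq_abs]
      exact key p₀ h0 h1 x hx
    have h6 := norm_integral_le_of_norm_le (hg.const_mul (C * p₀)) h5
    have h7 : (∫ x in S, C * p₀ * (|a x| * w x)) = C * p₀ * ∫ x in S, |a x| * w x :=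
      integral_const_mul _ _
    rw [profitD, ← hS, ← Real.norm_eq_abs]
    exact h6.trans (le_of_eq h7)
  refine ⟨⟨C, hCpos, 1, one_pos, fun p₀ h0 h1 => hbound p₀ h0 h1⟩, ?_⟩
  -- the limit statement
  rw [tendsto_zero_iff_abs_tendsto_zero]
  have hlim : Tendsto (fun p₀ : ℝ => C * p₀ * ∫ x in S, |a x| * w x)
      (nhdsWithin 0 (Set.Ioi 0)) (nhds 0) := by
    have h1 : Tendsto (fun p₀ : ℝ => C * p₀ * ∫ x in S, |a x| * w x)
        (nhds 0) (nhds (C * 0 * ∫ x in S, |a x| * w x)) :=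
      ((tendsto_id.const_mul C).mul_const _)
    simpa using h1.mono_left nhdsWithin_le_nhds
  refine squeeze_zero' ?_ ?_ hlim
  · filter_upwards with p₀; exact abs_nonneg _
  · filter_upwards [self_mem_nhdsWithin,
      mem_nhdsWithin_of_mem_nhds (Iio_mem_nhds one_pos)] with p₀ h0 h1
    exact hbound p₀ h0 h1
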